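/- arXiv:1202.5203 — 7 statements merged into one kernel-verified Lean document; each statement's English description precedes it below -/
import Mathlib

section
/- For n ≥ 5 and any abelian group E, the commutator subgroup of the wreath product G_n = E^n ⋊ S_n is perfect. -/
/-- The permutation action of `Equiv.Perm (Fin n)` on `Fin n → E` by permuting
coordinates, as a homomorphism to the automorphism group. -/
def permHom (n : ℕ) (E : Type*) [CommGroup E] :
    Equiv.Perm (Fin n) →* MulAut (Fin n → E) where
  toFun σ :=
    { toFun := fun f => f ∘ σ.symm
      invFun := fun f => f ∘ σ
      left_inv := fun f => by funext i; simp
      right_inv := fun f => by funext i; simp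
      map_mul' := fun f g => rfl }
  map_one' := by ext f i; rfl
  map_mul' σ τ := by ext f i; rfl

namespace WreathAux

open SemidirectProduct Equiv Equiv.Perm Subgroup
open scoped commutatorElement

/-- Abbreviation for the wreath product. -/
abbrev Gr (E : Type*) [CommGroup E] (n : ℕ) : Type _ :=
  (Fin n → E) ⋊[permHom n E] Equiv.Perm (Fin n)

variable {E : Type*} [CommGroup E] {n : ℕ}

/-- The homomorphism `G → E × ℤˣ`, `(f, σ) ↦ (∏ f, sign σ)`. -/
def psi (E : Type*) [CommGroup E] (n : ℕ) : Gr E n →* E × ℤˣ where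
  toFun x := (∏ i, x.left i, Equiv.Perm.sign x.right)
  map_one' := by simp [SemidirectProduct.one_left, SemidirectProduct.one_right]
  map_mul' a b := by
    have h1 : ∏ i, (a * b).left i = (∏ i, a.left i) * ∏ i, b.left i := by
      rw [SemidirectProduct.mul_left]
      simp only [Pi.mul_apply]
      rw [Finset.prod_mul_distrib]
      congr 1
      exact Equiv.prod_comp a.right.symm b.left
    have h2 : Equiv.Perm.sign (a * b).right
        = Equiv.Perm.sign a.right * Equiv.Perm.sign b.right := by
      rw [SemidirectProduct.mul_right, map_mul]
    exact Prod.ext h1 h2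

lemma mem_psi_ker {x : Gr E n} :
    x ∈ (psi E n).ker ↔ (∏ i, x.left i = 1 ∧ Equiv.Perm.sign x.right = 1) := by
  rw [MonoidHom.mem_ker, Prod.ext_iff]
  rfl

lemma inl_mem_ker {f : Fin n → E} (hf : ∏ i, f i = 1) :
    (inl f : Gr E n) ∈ (psi E n).ker := by
  rw [mem_psi_ker]
  exact ⟨hf, by simp [right_inl]⟩

lemma inr_mem_ker {σ : Equiv.Perm (Fin n)} (hσ : Equiv.Perm.sign σ = 1) :
    (inr σ : Gr E n) ∈ (psi E n).ker := by
  rw [mem_psi_ker]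
  refine ⟨?_, hσ⟩
  simp [left_inr]

lemma comm_inl_inr (f : Fin n → E) (σ : Equiv.Perm (Fin n)) :
    ⁅(inl f : Gr E n), (inr σ : Gr E n)⁆ = inl (f * ((permHom n E σ) f)⁻¹) := by
  have h := inl_aut (φ := permHom n E) σ f⁻¹
  rw [map_inv] at h
  rw [map_mul, h, map_inv, map_inv, commutatorElement_def]
  group

lemma mulSingle_apply_symm (σ : Equiv.Perm (Fin n)) (j : Fin n) (x : E) (i : Fin n) :
    (Pi.mulSingle j x : Fin n → E) (σ.symm i) = (Pi.mulSingle (σ j) x : Fin n → E) i := by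
  rcases eq_or_ne i (σ j) with rfl | h
  · rw [Equiv.symm_apply_apply, Pi.mulSingle_eq_same, Pi.mulSingle_eq_same]
  · have h2 : σ.symm i ≠ j := fun hc => h (by rw [← hc]; simp)
    rw [Pi.mulSingle_eq_of_ne h2, Pi.mulSingle_eq_of_ne h]

lemma prod_mulSingle_pair {j k : Fin n} (hjk : j ≠ k) (x : E) :
    ∏ i, ((Pi.mulSingle j x * Pi.mulSingle k x⁻¹ : Fin n → E)) i = 1 := by
  simp only [Pi.mul_apply]
  rw [Finset.prod_mul_distrib, Finset.prod_pi_mulSingle' j x, Finset.prod_pi_mulSingle' k x⁻¹]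
  simp

/-- For distinct `j k` and `n ≥ 5`, the element `e_j(x) e_k(x⁻¹)` (embedded via `inl`)
lies in the commutator of the kernel of `psi`. -/
lemma pair_mem (hn : 5 ≤ n) (x : E) {j k : Fin n} (hjk : j ≠ k) :
    (inl (Pi.mulSingle j x * Pi.mulSingle k x⁻¹) : Gr E n)
      ∈ ⁅(psi E n).ker, (psi E n).ker⁆ := by
  classical
  -- pick m ∉ {j,k} and l ∉ {j,k,m}
  obtain ⟨m, hm⟩ : ∃ m, m ∉ ({j, k} : Finset (Fin n)) := by
    by_contra h
    push_neg at h
    have hsub : (Finset.univ : Finset (Fin n)) ⊆ {j, k} := fun i _ => h i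
    have hle := Finset.card_le_card hsub
    have h2 : ({j, k} : Finset (Fin n)).card ≤ 2 :=
      (Finset.card_insert_le _ _).trans (by simp)
    simp [Finset.card_univ] at hle
    omega
  obtain ⟨l, hl⟩ : ∃ l, l ∉ ({j, k, m} : Finset (Fin n)) := by
    by_contra h
    push_neg at h
    have hsub : (Finset.univ : Finset (Fin n)) ⊆ {j, k, m} := fun i _ => h i
    have hle := Finset.card_le_card hsub
    have h2 : ({j, k, m} : Finset (Fin n)).card ≤ 3 := by
      refine (Finset.card_insert_le _ _).trans ?_
      have h3 : ({k, m} : Finset (Fin n)).card ≤ 2 :=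
        (Finset.card_insert_le _ _).trans (by simp)
      omega
    simp [Finset.card_univ] at hle
    omega
  simp only [Finset.mem_insert, Finset.mem_singleton, not_or] at hm hl
  obtain ⟨hmj, hmk⟩ := hm
  obtain ⟨hlj, hlk, hlm⟩ := hl
  set σ : Equiv.Perm (Fin n) := Equiv.swap l k * Equiv.swap j l with hσdef
  set f : Fin n → E := Pi.mulSingle j x * Pi.mulSingle m x⁻¹ with hfdef
  have hfK : (inl f : Gr E n) ∈ (psi E n).ker :=
    inl_mem_ker (prod_mulSingle_pair (Ne.symm hmj) x)
  have hσK : (inr σ : Gr E n) ∈ (psi E n).ker := by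
    apply inr_mem_ker
    rw [hσdef, map_mul, Equiv.Perm.sign_swap hlk, Equiv.Perm.sign_swap (Ne.symm hlj)]
    simp
  have key := Subgroup.commutator_mem_commutator hfK hσK
  rw [comm_inl_inr] at key
  have hσj : σ j = k := by
    simp only [hσdef, Equiv.Perm.mul_apply]
    rw [Equiv.swap_apply_left, Equiv.swap_apply_left]
  have hσm : σ m = m := by
    simp only [hσdef, Equiv.Perm.mul_apply]
    rw [Equiv.swap_apply_of_ne_of_ne hmj (Ne.symm hlm),
      Equiv.swap_apply_of_ne_of_ne (Ne.symm hlm) hmk]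
  have hcomp : (permHom n E σ) f = Pi.mulSingle k x * Pi.mulSingle m x⁻¹ := by
    funext i
    show f (σ.symm i) = _
    have hstep : f (σ.symm i)
        = (Pi.mulSingle j x : Fin n → E) (σ.symm i)
          * (Pi.mulSingle m x⁻¹ : Fin n → E) (σ.symm i) := by rw [hfdef]; rfl
    rw [hstep, mulSingle_apply_symm σ j x i, mulSingle_apply_symm σ m x⁻¹ i, hσj, hσm]
    rfl
  have hEq : f * ((permHom n E σ) f)⁻¹
      = Pi.mulSingle j x * Pi.mulSingle k x⁻¹ := by
    have hD : (Pi.mulSingle k x⁻¹ : Fin n → E) = (Pi.mulSingle k x)⁻¹ :=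
      Pi.mulSingle_inv (f := fun _ => E) k x
    rw [hcomp, hfdef, hD, mul_inv, mul_mul_mul_comm, mul_inv_cancel, mul_one]
  rwa [hEq] at key

/-- Every `inl f` with `∏ f = 1` lies in the commutator of the kernel. -/
lemma inl_gen (hn : 5 ≤ n) (f : Fin n → E) (hf : ∏ i, f i = 1) :
    (inl f : Gr E n) ∈ ⁅(psi E n).ker, (psi E n).ker⁆ := by
  classical
  have hn0 : 0 < n := by omega
  set i₀ : Fin n := ⟨0, hn0⟩ with hi₀
  suffices H : ∀ (N : ℕ) (f : Fin n → E),
      (Finset.univ.filter fun i => f i ≠ 1 ∧ i ≠ i₀).card ≤ N → ∏ i, f i = 1 →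
      (inl f : Gr E n) ∈ ⁅(psi E n).ker, (psi E n).ker⁆ by
    exact H _ f le_rfl hf
  intro N
  induction N with
  | zero =>
      intro f hcard hf
      have hfi : ∀ i, i ≠ i₀ → f i = 1 := by
        intro i hi
        by_contra h
        have hmem : i ∈ Finset.univ.filter fun i => f i ≠ 1 ∧ i ≠ i₀ := by
          simp [h, hi]
        have := Finset.card_pos.mpr ⟨i, hmem⟩
        omega
      have hf1 : f = 1 := by
        funext i
        rcases eq_or_ne i i₀ with h | hi
        · rw [h]
          have hps := Finset.prod_eq_single (f := f) (a := i₀)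
            (fun b _ hb => hfi b hb) (fun hc => absurd (Finset.mem_univ i₀) hc)
          rw [hf] at hps
          exact hps.symm
        · exact hfi i hi
      rw [hf1, map_one]
      exact one_mem _
  | succ N ih =>
      intro f hcard hf
      rcases Nat.lt_or_ge (Finset.univ.filter fun i => f i ≠ 1 ∧ i ≠ i₀).card (N + 1) with h | h
      · exact ih f (by omega) hf
      · have hcard' : (Finset.univ.filter fun i => f i ≠ 1 ∧ i ≠ i₀).card = N + 1 := by omega
        have hne : (Finset.univ.filter fun i => f i ≠ 1 ∧ i ≠ i₀).Nonempty := by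
          rw [← Finset.card_pos]; omega
        obtain ⟨i, hi⟩ := hne
        simp only [Finset.mem_filter, Finset.mem_univ, true_and] at hi
        obtain ⟨hfi, hii₀⟩ := hi
        set p : Fin n → E := Pi.mulSingle i (f i) * Pi.mulSingle i₀ (f i)⁻¹ with hp
        set g : Fin n → E := f * p⁻¹ with hg
        have hgp : f = g * p := by rw [hg]; group
        have hprodp : ∏ k, p k = 1 := prod_mulSingle_pair hii₀ (f i)
        have hprodg : ∏ k, g k = 1 := by
          rw [hg]
          simp only [Pi.mul_apply, Pi.inv_apply]
          rw [Finset.prod_mul_distrib, hf, one_mul, Finset.prod_inv_distrib, hprodp, inv_one]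
        have hgi : g i = 1 := by
          rw [hg, hp]
          simp only [Pi.mul_apply, Pi.inv_apply]
          rw [Pi.mulSingle_eq_same, Pi.mulSingle_eq_of_ne hii₀]
          group
        have hgother : ∀ k, k ≠ i → k ≠ i₀ → g k = f k := by
          intro k hki hki₀
          rw [hg, hp]
          simp only [Pi.mul_apply, Pi.inv_apply]
          rw [Pi.mulSingle_eq_of_ne hki, Pi.mulSingle_eq_of_ne hki₀]
          group
        have hsub : (Finset.univ.filter fun k => g k ≠ 1 ∧ k ≠ i₀)
            ⊆ (Finset.univ.filter fun k => f k ≠ 1 ∧ k ≠ i₀).erase i := by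
          intro k hk
          simp only [Finset.mem_filter, Finset.mem_univ, true_and] at hk
          obtain ⟨hk1, hk2⟩ := hk
          have hki : k ≠ i := by
            rintro rfl
            exact hk1 hgi
          rw [Finset.mem_erase]
          refine ⟨hki, ?_⟩
          simp only [Finset.mem_filter, Finset.mem_univ, true_and]
          exact ⟨by rwa [← hgother k hki hk2], hk2⟩
        have hcardg : (Finset.univ.filter fun k => g k ≠ 1 ∧ k ≠ i₀).card ≤ N := by
          have h1 := Finset.card_le_card hsub
          have h2 : ((Finset.univ.filter fun k => f k ≠ 1 ∧ k ≠ i₀).erase i).card = N := by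
            rw [Finset.card_erase_of_mem (by simp [hfi, hii₀]), hcard']
            omega
          omega
        have hgmem := ih g hcardg hprodg
        have hpmem := pair_mem (E := E) hn (f i) hii₀
        rw [hgp, map_mul]
        exact mul_mem hgmem hpmem

/-- Every `inr σ` with `σ` even lies in the commutator of the kernel. -/
lemma inr_gen (hn : 5 ≤ n) (σ : Equiv.Perm (Fin n)) (hσ : Equiv.Perm.sign σ = 1) :
    (inr σ : Gr E n) ∈ ⁅(psi E n).ker, (psi E n).ker⁆ := by
  classical
  have h5 : 5 ≤ Nat.card (Fin n) := by simp [hn]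
  have hσA : σ ∈ alternatingGroup (Fin n) := Equiv.Perm.mem_alternatingGroup.2 hσ
  rw [← Equiv.Perm.closure_three_cycles_eq_alternating] at hσA
  clear hσ
  induction hσA using Subgroup.closure_induction with
  | mem τ hτ =>
      have hτ3 : Equiv.Perm.IsThreeCycle τ := hτ
      have hτ2 : Equiv.Perm.IsThreeCycle (τ * τ) := hτ3.isThreeCycle_sq
      have hc : IsConj (⟨τ, hτ3.mem_alternatingGroup⟩ : alternatingGroup (Fin n))
          ⟨τ * τ, hτ2.mem_alternatingGroup⟩ :=
        alternatingGroup.isThreeCycle_isConj h5 hτ3 hτ2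
      obtain ⟨π, hπ⟩ := isConj_iff.1 hc
      have hπ' : (π : Equiv.Perm (Fin n)) * τ * (π : Equiv.Perm (Fin n))⁻¹ = τ * τ := by
        have := congrArg (Subtype.val) hπ
        simpa using this
      have hcomm : (inr τ : Gr E n)
          = ⁅(inr (π : Equiv.Perm (Fin n)) : Gr E n), (inr τ : Gr E n)⁆ := by
        rw [commutatorElement_def, ← map_inv, ← map_inv, ← map_mul, ← map_mul, ← map_mul]
        congr 1
        rw [hπ']
        group
      rw [hcomm]
      exact Subgroup.commutator_mem_commutator
        (inr_mem_ker (Equiv.Perm.mem_alternatingGroup.1 π.2))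
        (inr_mem_ker hτ3.sign)
  | one => rw [map_one]; exact one_mem _
  | mul x y _ _ hx hy => rw [map_mul]; exact mul_mem hx hy
  | inv x _ hx => rw [map_inv]; exact inv_mem hx

end WreathAux

/-- For `n ≥ 5` and any abelian group `E`, the commutator subgroup of the
wreath product `Gₙ = Eⁿ ⋊ Sₙ` is perfect. -/
theorem stmt_1 (E : Type*) [CommGroup E] (n : ℕ) (hn : 5 ≤ n) :
    commutator ↥(commutator ((Fin n → E) ⋊[permHom n E] Equiv.Perm (Fin n))) = ⊤ := by
  set G := (Fin n → E) ⋊[permHom n E] Equiv.Perm (Fin n)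
  set K : Subgroup G := (WreathAux.psi E n).ker with hK
  have hHK : commutator G ≤ K := Abelianization.commutator_subset_ker (WreathAux.psi E n)
  have hKJ : K ≤ ⁅K, K⁆ := by
    intro x hx
    obtain ⟨h1, h2⟩ := (WreathAux.mem_psi_ker).1 hx
    rw [← SemidirectProduct.inl_left_mul_inr_right x]
    exact mul_mem (WreathAux.inl_gen hn x.left h1) (WreathAux.inr_gen hn x.right h2)
  have hJH : ⁅K, K⁆ ≤ commutator G :=
    Subgroup.commutator_mono le_top le_top
  have hHeq : commutator G = K := le_antisymm hHK (le_trans hKJ hJH)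
  have hperf : ⁅commutator G, commutator G⁆ = commutator G := by
    rw [hHeq]
    exact le_antisymm (hHeq ▸ hJH) hKJ
  have hinj : Function.Injective (Subgroup.map (commutator G).subtype) :=
    Subgroup.map_injective (commutator G).subtype_injective
  apply hinj
  have hmc : Subgroup.map (commutator G).subtype (commutator ↥(commutator G))
      = ⁅Subgroup.map (commutator G).subtype ⊤, Subgroup.map (commutator G).subtype ⊤⁆ :=
    Subgroup.map_commutator ⊤ ⊤ _
  have htop : Subgroup.map (commutator G).subtype (⊤ : Subgroup ↥(commutator G))
      = commutator G := by
    rw [← MonoidHom.range_eq_map]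
    exact Subgroup.range_subtype _
  rw [hmc, htop]
  exact hperf
end

section
/- For n ≥ 5 and any abelian group E, the abelianization of H = K ⋊ A_n is trivial, where K = ker(E^n → E) is the kernel of the product map and A_n is the alternating group acting on K by permuting coordinates. -/
variable (n : ℕ) (E : Type*) [CommGroup E]

/-- The product map `Eⁿ → E`. -/
def prodHom : (Fin n → E) →* E where
  toFun f := ∏ i, f i
  map_one' := by simp
  map_mul' f g := by simp [Finset.prod_mul_distrib]

/-- `K = ker (Eⁿ → E)`, the kernel of the product map. -/
def Ker : Subgroup (Fin n → E) := (prodHom n E).ker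

/-- The action of a permutation `σ` on `K = ker (Eⁿ → E)` by permuting
coordinates. -/
def KerAut (σ : Equiv.Perm (Fin n)) : MulAut ↥(Ker n E) where
  toFun x := ⟨fun i => x.1 (σ⁻¹ i), by
    have h : ∏ i, x.1 (σ⁻¹ i) = ∏ i, x.1 i := Equiv.prod_comp σ⁻¹ x.1
    have hx : ∏ i, x.1 i = 1 := x.2
    simpa [Ker, prodHom, MonoidHom.mem_ker] using h.trans hx⟩
  invFun x := ⟨fun i => x.1 (σ i), by
    have h : ∏ i, x.1 (σ i) = ∏ i, x.1 i := Equiv.prod_comp σ x.1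
    have hx : ∏ i, x.1 i = 1 := x.2
    simpa [Ker, prodHom, MonoidHom.mem_ker, h] using hx⟩
  left_inv x := Subtype.ext (funext fun i => by simp)
  right_inv x := Subtype.ext (funext fun i => by simp)
  map_mul' x y := Subtype.ext rfl

/-- The action of the alternating group `Aₙ` on `K = ker (Eⁿ → E)`. -/
def altHom : ↥(alternatingGroup (Fin n)) →* MulAut ↥(Ker n E) where
  toFun σ := KerAut n E σ.1
  map_one' := by
    ext x i
    rfl
  map_mul' σ τ := by
    ext x i
    rfl

-- auxiliary defs
def vfun (a : E) (i j : Fin n) : Fin n → E :=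
  fun p => (if p = i then a else 1) * (if p = j then a⁻¹ else 1)

lemma vfun_mem (a : E) (i j : Fin n) : vfun n E a i j ∈ Ker n E := by
  have : ∏ p, vfun n E a i j p = 1 := by
    unfold vfun
    rw [Finset.prod_mul_distrib]
    simp
  simpa [Ker, prodHom, MonoidHom.mem_ker] using this

def vK (a : E) (i j : Fin n) : ↥(Ker n E) := ⟨vfun n E a i j, vfun_mem n E a i j⟩

lemma vK_mul (a : E) {i l j : Fin n} (hil : i ≠ l) (hlj : l ≠ j) (hij : i ≠ j) :
    vK n E a i l * vK n E a l j = vK n E a i j := by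
  apply Subtype.ext
  funext p
  show vfun n E a i l p * vfun n E a l j p = vfun n E a i j p
  unfold vfun
  split_ifs <;> simp_all <;> group

lemma altHom_vK (σ : ↥(alternatingGroup (Fin n))) (a : E) (i j : Fin n) :
    altHom n E σ (vK n E a i j) = vK n E a (σ.1 i) (σ.1 j) := by
  apply Subtype.ext
  funext p
  show vfun n E a i j (σ.1⁻¹ p) = vfun n E a (σ.1 i) (σ.1 j) p
  unfold vfun
  simp only [Equiv.Perm.inv_eq_iff_eq]

lemma exists_ne_ne (i j : Fin n) (h : 5 ≤ n) : ∃ c, c ≠ i ∧ c ≠ j := by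
  have h1 : (({i,j} : Finset (Fin n))ᶜ).Nonempty := by
    rw [← Finset.card_pos, Finset.card_compl]
    have := Finset.card_insert_le i ({j} : Finset (Fin n))
    simp only [Finset.card_singleton, Fintype.card_fin] at *
    omega
  obtain ⟨c, hc⟩ := h1
  simp only [Finset.mem_compl, Finset.mem_insert, Finset.mem_singleton, not_or] at hc
  exact ⟨c, hc.1, hc.2⟩

lemma exists_ne_ne_ne (i j l : Fin n) (h : 5 ≤ n) : ∃ c, c ≠ i ∧ c ≠ j ∧ c ≠ l := by
  have h1 : (({i,j,l} : Finset (Fin n))ᶜ).Nonempty := by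
    rw [← Finset.card_pos, Finset.card_compl]
    have h2 := Finset.card_insert_le i ({j,l} : Finset (Fin n))
    have h3 := Finset.card_insert_le j ({l} : Finset (Fin n))
    simp only [Finset.card_singleton, Fintype.card_fin] at *
    omega
  obtain ⟨c, hc⟩ := h1
  simp only [Finset.mem_compl, Finset.mem_insert, Finset.mem_singleton, not_or] at hc
  exact ⟨c, hc.1, hc.2.1, hc.2.2⟩

-- generator case: f kills three-cycles
lemma gen_case {C : Type*} [CommGroup C] (hcard : 5 ≤ Fintype.card (Fin n))
    (f : ↥(alternatingGroup (Fin n)) →* C) (g : Equiv.Perm (Fin n))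
    (hg : g.IsThreeCycle) :
    g ∈ Subgroup.map (alternatingGroup (Fin n)).subtype f.ker := by
  have hmem : g ∈ alternatingGroup (Fin n) := hg.mem_alternatingGroup
  have h2 : Equiv.Perm.IsThreeCycle (g * g) := hg.isThreeCycle_sq
  have hmem2 : g * g ∈ alternatingGroup (Fin n) := h2.mem_alternatingGroup
  have hc : IsConj (⟨g, hmem⟩ : ↥(alternatingGroup (Fin n))) ⟨g * g, hmem2⟩ :=
    alternatingGroup.isThreeCycle_isConj (by rwa [Nat.card_eq_fintype_card]) hg h2
  have hsq : (⟨g * g, hmem2⟩ : ↥(alternatingGroup (Fin n))) = ⟨g, hmem⟩ * ⟨g, hmem⟩ := rfl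
  refine ⟨⟨g, hmem⟩, ?_, rfl⟩
  obtain ⟨c, hc⟩ := hc
  have heq := congrArg f hc.eq
  simp only [map_mul] at heq
  have hfeq : f ⟨g, hmem⟩ = f ⟨g * g, hmem2⟩ := by
    rw [mul_comm (f c)] at heq
    exact mul_right_cancel heq
  rw [hsq, map_mul] at hfeq
  have hone : f ⟨g, hmem⟩ = 1 := left_eq_mul.mp hfeq
  simpa [MonoidHom.mem_ker] using hone

-- A_n is perfect (n ≥ 5): any hom to a commutative group is trivial
lemma alt_hom_eq_one {C : Type*} [CommGroup C] (h : 5 ≤ n)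
    (f : ↥(alternatingGroup (Fin n)) →* C) (σ : ↥(alternatingGroup (Fin n))) : f σ = 1 := by
  have hcard : 5 ≤ Fintype.card (Fin n) := by simpa
  have hsub : alternatingGroup (Fin n) ≤
      Subgroup.map (alternatingGroup (Fin n)).subtype f.ker := by
    have hsub' : Subgroup.closure {σ : Equiv.Perm (Fin n) | σ.IsThreeCycle} ≤
        Subgroup.map (alternatingGroup (Fin n)).subtype f.ker := by
      rw [Subgroup.closure_le]
      intro g hg
      exact gen_case n hcard f g hg
    rwa [Equiv.Perm.closure_three_cycles_eq_alternating] at hsub'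
  obtain ⟨τ, hτker, hτeq⟩ := hsub σ.2
  have : τ = σ := Subtype.ext hτeq
  rw [← this]
  simpa [MonoidHom.mem_ker] using hτker

-- conjugation relation in the abelianization
lemma phi_aut (σ : ↥(alternatingGroup (Fin n))) (k : ↥(Ker n E)) :
    Abelianization.of (SemidirectProduct.inl (φ := altHom n E) (altHom n E σ k)) =
      Abelianization.of (SemidirectProduct.inl k) := by
  rw [SemidirectProduct.inl_aut]
  simp only [map_mul, map_inv]
  rw [mul_comm (Abelianization.of (SemidirectProduct.inr σ))
    (Abelianization.of (SemidirectProduct.inl k)), mul_inv_cancel_right]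

lemma phi_vK_eq_one (h : 5 ≤ n) (a : E) {i j : Fin n} (hij : i ≠ j) :
    Abelianization.of (SemidirectProduct.inl (φ := altHom n E) (vK n E a i j)) = 1 := by
  obtain ⟨c, hci, hcj⟩ := exists_ne_ne n i j h
  obtain ⟨m, hmc, hmi, hmj⟩ := exists_ne_ne_ne n c i j h
  have hsign : Equiv.swap i j * Equiv.swap j m ∈ alternatingGroup (Fin n) := by
    rw [Equiv.Perm.mem_alternatingGroup, map_mul, Equiv.Perm.sign_swap hij,
      Equiv.Perm.sign_swap (Ne.symm hmj)]
    norm_num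
  set σ : ↥(alternatingGroup (Fin n)) := ⟨_, hsign⟩ with hσ
  have hσc : σ.1 c = c := by
    show (Equiv.swap i j) ((Equiv.swap j m) c) = c
    rw [Equiv.swap_apply_of_ne_of_ne hcj (Ne.symm hmc),
      Equiv.swap_apply_of_ne_of_ne hci hcj]
  have hσi : σ.1 i = j := by
    show (Equiv.swap i j) ((Equiv.swap j m) i) = j
    rw [Equiv.swap_apply_of_ne_of_ne hij (Ne.symm hmi), Equiv.swap_apply_left]
  have key1 : vK n E a c i * vK n E a i j = vK n E a c j := vK_mul n E a hci hij hcj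
  have key2 := phi_aut n E σ (vK n E a c i)
  rw [altHom_vK, hσc, hσi] at key2
  have key3 : Abelianization.of (SemidirectProduct.inl (φ := altHom n E) (vK n E a c j)) =
      Abelianization.of (SemidirectProduct.inl (φ := altHom n E) (vK n E a c i)) *
      Abelianization.of (SemidirectProduct.inl (φ := altHom n E) (vK n E a i j)) := by
    rw [← map_mul, ← map_mul, key1]
  exact (left_eq_mul.mp (key2.symm.trans key3))

lemma ker_decomp (i0 : Fin n) (k : ↥(Ker n E)) :
    k = ∏ i ∈ Finset.univ.erase i0, vK n E (k.1 i) i i0 := by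
  have hk : ∏ i, k.1 i = 1 := k.2
  apply Subtype.ext
  have hco : ((∏ i ∈ Finset.univ.erase i0, vK n E (k.1 i) i i0 : ↥(Ker n E)) : Fin n → E)
      = ∏ i ∈ Finset.univ.erase i0, vfun n E (k.1 i) i i0 := by
    push_cast
    rfl
  rw [hco]
  funext p
  rw [Finset.prod_apply]
  unfold vfun
  rw [Finset.prod_mul_distrib]
  by_cases hp : p = i0
  · subst hp
    have h1 : ∏ i ∈ Finset.univ.erase p, (if p = i then k.1 i else 1) = 1 := by
      apply Finset.prod_eq_one
      intro i hi
      rw [if_neg]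
      exact fun hpi => (Finset.ne_of_mem_erase hi) hpi.symm
    have h2 : ∏ i ∈ Finset.univ.erase p, (if p = p then (k.1 i)⁻¹ else 1)
        = (∏ i ∈ Finset.univ.erase p, k.1 i)⁻¹ := by
      simp
    rw [h1, h2, one_mul]
    have h3 : k.1 p * ∏ i ∈ Finset.univ.erase p, k.1 i = 1 := by
      rw [Finset.mul_prod_erase Finset.univ k.1 (Finset.mem_univ p)]
      exact hk
    exact eq_inv_iff_mul_eq_one.mpr h3
  · have h1 : ∏ i ∈ Finset.univ.erase i0, (if p = i then k.1 i else 1) = k.1 p := by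
      rw [Finset.prod_ite_eq]
      simp [Finset.mem_erase, hp]
    have h2 : ∏ i ∈ Finset.univ.erase i0, (if p = i0 then (k.1 i)⁻¹ else 1) = 1 := by
      simp [hp]
    rw [h1, h2, mul_one]


/-- For `n ≥ 5` and any abelian group `E`, the abelianization of
`H = K ⋊ Aₙ` is trivial, where `K = ker (Eⁿ → E)` and the alternating group
`Aₙ` acts by permuting coordinates. -/
theorem stmt_2 (hn : 5 ≤ n) :
    ∀ x : Abelianization (↥(Ker n E) ⋊[altHom n E] ↥(alternatingGroup (Fin n))),
      x = 1 := by
  intro x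
  obtain ⟨g, rfl⟩ := Quotient.exists_rep x
  show Abelianization.of g = 1
  rw [← SemidirectProduct.inl_left_mul_inr_right g, map_mul]
  have h1 : Abelianization.of (SemidirectProduct.inr (φ := altHom n E) g.right) = 1 :=
    alt_hom_eq_one n hn ((Abelianization.of).comp (SemidirectProduct.inr)) g.right
  have h2 : Abelianization.of (SemidirectProduct.inl (φ := altHom n E) g.left) = 1 := by
    have h0 : (0:ℕ) < n := by omega
    set i0 : Fin n := ⟨0, h0⟩
    rw [ker_decomp n E i0 g.left]
    rw [← MonoidHom.comp_apply (Abelianization.of) (SemidirectProduct.inl (φ := altHom n E)),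
      map_prod ((Abelianization.of).comp (SemidirectProduct.inl (φ := altHom n E)))
      (fun i => vK n E (g.left.1 i) i i0) (Finset.univ.erase i0)]
    simp only [MonoidHom.comp_apply]
    apply Finset.prod_eq_one
    intro i hi
    exact phi_vK_eq_one n E hn _ (Finset.ne_of_mem_erase hi)
  rw [h1, h2, mul_one]
end

section
/- Let F be a number field with embedding σ : F → ℂ and E = {x ∈ F^× : |σ(x)| = 1}. Then E/μ_F is a free abelian group (of at most countable rank), where μ_F is the group of roots of unity of F. Consequently E ≅ μ_F ⊕ ℤ^(S) for some at most countable set S. -/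
open Function Submodule Finsupp

namespace StmtAux

noncomputable section

variable (N : Submodule ℤ (ℕ →₀ ℤ))

/-- elements of `N` supported on `{0, ..., n-1}` -/
def lev (n : ℕ) : Submodule ℤ (ℕ →₀ ℤ) := N ⊓ Finsupp.supported ℤ ℤ (Set.Iio n)

/-- the ideal of `n`-th coordinates of elements of `lev (n+1)` -/
def idl (n : ℕ) : Ideal ℤ :=
  Submodule.map (Finsupp.lapply n : (ℕ →₀ ℤ) →ₗ[ℤ] ℤ) (lev N (n + 1))

def gen (n : ℕ) : ℤ := Submodule.IsPrincipal.generator (idl N n)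

theorem span_gen (n : ℕ) : Ideal.span {gen N n} = idl N n :=
  Submodule.IsPrincipal.span_singleton_generator (idl N n)

open scoped Classical in
/-- chosen element of `lev (n+1)` whose `n`-th coordinate is `gen n` -/
def xel (n : ℕ) : ℕ →₀ ℤ :=
  if h : gen N n = 0 then 0
  else (Submodule.mem_map.mp (Submodule.IsPrincipal.generator_mem (idl N n))).choose

theorem xel_mem (n : ℕ) : xel N n ∈ lev N (n + 1) := by
  rw [xel]
  split
  · exact zero_mem _
  · exact (Submodule.mem_map.mp (Submodule.IsPrincipal.generator_mem (idl N n))).choose_spec.1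

theorem xel_apply (n : ℕ) : xel N n n = gen N n := by
  rw [xel]
  split
  · simp [*]
  · exact (Submodule.mem_map.mp (Submodule.IsPrincipal.generator_mem (idl N n))).choose_spec.2

theorem xel_mem_N (n : ℕ) : xel N n ∈ N := (xel_mem N n).1

theorem xel_supported (n : ℕ) : xel N n ∈ Finsupp.supported ℤ ℤ (Set.Iio (n + 1)) :=
  (xel_mem N n).2

theorem xel_apply_eq_zero {n m : ℕ} (h : n < m) : xel N n m = 0 :=
  (Finsupp.mem_supported' ℤ _).mp (xel_supported N n) m (by simp; omega)

theorem step {n : ℕ} {y : ℕ →₀ ℤ} (hy : y ∈ lev N (n + 1)) :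
    ∃ c : ℤ, y - c • xel N n ∈ lev N n := by
  have h1 : y n ∈ idl N n := Submodule.mem_map.mpr ⟨y, hy, rfl⟩
  rw [← span_gen, Ideal.mem_span_singleton'] at h1
  obtain ⟨c, hc⟩ := h1
  refine ⟨c, sub_mem hy.1 (Submodule.smul_mem _ _ (xel_mem_N N n)), ?_⟩
  show _ ∈ Finsupp.supported ℤ ℤ (Set.Iio n)
  rw [Finsupp.mem_supported' ℤ]
  intro k hk
  simp only [Set.mem_Iio, not_lt] at hk
  rcases eq_or_lt_of_le hk with rfl | hk'
  · simp [Finsupp.sub_apply, Finsupp.smul_apply, xel_apply, smul_eq_mul, hc]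
  · have h2 : y k = 0 := (Finsupp.mem_supported' ℤ _).mp hy.2 k (by simp; omega)
    have h3 : xel N n k = 0 := xel_apply_eq_zero N (by omega)
    simp [Finsupp.sub_apply, h2, h3]

theorem spanning_aux (n : ℕ) : ∀ y ∈ lev N n, y ∈ Submodule.span ℤ (Set.range (xel N)) := by
  induction n with
  | zero =>
    intro y hy
    have : y = 0 := by
      ext k
      exact (Finsupp.mem_supported' ℤ _).mp hy.2 k (by simp)
    simp [this]
  | succ n ih =>
    intro y hy
    obtain ⟨c, hc⟩ := step N hy
    have h1 := ih _ hc
    have h2 : xel N n ∈ Submodule.span ℤ (Set.range (xel N)) :=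
      Submodule.subset_span ⟨n, rfl⟩
    have : y = (y - c • xel N n) + c • xel N n := (sub_add_cancel _ _).symm
    rw [this]
    exact add_mem h1 (Submodule.smul_mem _ _ h2)

theorem spanning : N ≤ Submodule.span ℤ (Set.range (xel N)) := by
  intro y hy
  refine spanning_aux N (y.support.sup id + 1) y ⟨hy, ?_⟩
  show _ ∈ Finsupp.supported ℤ ℤ _
  rw [Finsupp.mem_supported' ℤ]
  intro k hk
  by_contra h
  have : k ∈ y.support := Finsupp.mem_support_iff.mpr h
  have := Finset.le_sup (f := id) this
  simp only [Set.mem_Iio, not_lt, id] at hk this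
  omega

theorem indep : LinearIndependent ℤ (fun i : {n : ℕ // gen N n ≠ 0} => xel N i) := by
  classical
  rw [linearIndependent_iff']
  intro s g hsum
  induction s using Finset.induction_on_max with
  | empty => simp
  | insert a s ha ih =>
    have hans : a ∉ s := fun h => lt_irrefl a (ha a h)
    rw [Finset.sum_insert hans] at hsum
    have hga : g a = 0 := by
      have hcoord := congrArg (fun f : ℕ →₀ ℤ => f (a : ℕ)) hsum
      simp only [Finsupp.add_apply, Finsupp.coe_zero, Pi.zero_apply] at hcoord
      rw [Finsupp.finset_sum_apply] at hcoord
      have hz : ∀ i ∈ s, (g i • xel N (i : ℕ)) (a : ℕ) = 0 := by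
        intro i hi
        have : (i : ℕ) < (a : ℕ) := ha i hi
        simp [Finsupp.smul_apply, xel_apply_eq_zero N this]
      rw [Finset.sum_eq_zero hz, add_zero, Finsupp.smul_apply, xel_apply, smul_eq_mul] at hcoord
      exact (mul_eq_zero.mp hcoord).resolve_right a.2
    rw [hga, zero_smul, zero_add] at hsum
    intro i hi
    rcases Finset.mem_insert.mp hi with rfl | hi'
    · exact hga
    · exact ih hsum i hi'

theorem range_xel_sub :
    Set.range (xel N) ⊆ insert 0 (Set.range (fun i : {n : ℕ // gen N n ≠ 0} => xel N i)) := by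
  rintro _ ⟨n, rfl⟩
  by_cases h : gen N n = 0
  · left
    simp [xel, h]
  · right
    exact ⟨⟨n, h⟩, rfl⟩

theorem span_eq :
    Submodule.span ℤ (Set.range (fun i : {n : ℕ // gen N n ≠ 0} => xel N i)) = N := by
  apply le_antisymm
  · rw [Submodule.span_le]
    rintro _ ⟨i, rfl⟩
    exact xel_mem_N N i
  · refine le_trans (spanning N) ?_
    refine le_trans (Submodule.span_mono (range_xel_sub N)) ?_
    rw [Submodule.span_insert_zero]

/-- Every submodule of `ℕ →₀ ℤ` is free with countable basis. -/
theorem exists_equiv_nat :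
    ∃ T : Type, Countable T ∧ Nonempty (N ≃ₗ[ℤ] (T →₀ ℤ)) := by
  refine ⟨{n : ℕ // gen N n ≠ 0}, inferInstance, ?_⟩
  have b := Module.Basis.span (indep N)
  exact ⟨(LinearEquiv.ofEq _ _ (span_eq N).symm).trans b.repr⟩

/-- Every submodule of `ι →₀ ℤ` for countable `ι` is free with countable basis. -/
theorem exists_equiv {ι : Type*} [Countable ι] (N : Submodule ℤ (ι →₀ ℤ)) :
    ∃ T : Type, Countable T ∧ Nonempty (N ≃ₗ[ℤ] (T →₀ ℤ)) := by
  obtain ⟨f, hf⟩ := Countable.exists_injective_nat ι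
  have hL : Injective (Finsupp.lmapDomain ℤ ℤ f) := Finsupp.mapDomain_injective hf
  obtain ⟨T, hT, ⟨e⟩⟩ := exists_equiv_nat (N.map (Finsupp.lmapDomain ℤ ℤ f))
  exact ⟨T, hT, ⟨(Submodule.equivMapOfInjective _ hL N).trans e⟩⟩

end
end StmtAux

open Function

namespace StmtAux

noncomputable section

/-- splitting off a free quotient -/
theorem split {A B : Type*} [AddCommGroup A] [Module ℤ A] [AddCommGroup B] [Module ℤ B]
    {S : Type*} (eB : B ≃ₗ[ℤ] (S →₀ ℤ)) (q : A →ₗ[ℤ] B) (hq : Surjective q) :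
    Nonempty (A ≃+ (↥(LinearMap.ker q) × B)) := by
  haveI : Module.Free ℤ B := Module.Free.of_equiv eB.symm
  obtain ⟨s, hs⟩ := Module.projective_lifting_property q LinearMap.id hq
  have hsec : ∀ b, q (s b) = b := fun b => congrFun (congrArg DFunLike.coe hs) b
  refine ⟨AddEquiv.mk' (Equiv.mk
    (fun a => (⟨a - s (q a), by simp [LinearMap.mem_ker, hsec]⟩, q a))
    (fun p => (p.1 : A) + s p.2) ?_ ?_) ?_⟩
  · intro a
    exact sub_add_cancel _ _
  · rintro ⟨⟨k, hk⟩, b⟩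
    have hk0 : q k = 0 := LinearMap.mem_ker.mp hk
    ext
    · simp [hk0, hsec]
    · simp [hk0, hsec]
  · intro a b
    have h1 : q (a + b) = q a + q b := map_add q a b
    refine Prod.ext (Subtype.ext ?_) h1
    simp only [Equiv.coe_fn_mk, Prod.fst_add, Submodule.coe_add]
    rw [h1, map_add]
    abel

/-- abstract final lemma -/
theorem final_abstract {G T M : Type*} [CommGroup G] [CommGroup T] [CommGroup M]
    (e : G ≃* T × M) (hT : ∀ t : T, IsOfFinOrder t) (hM : ∀ m : M, IsOfFinOrder m → m = 1) :
    Nonempty ((G ⧸ CommGroup.torsion G) ≃* M) ∧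
      Nonempty (G ≃* ↥(CommGroup.torsion G) × M) := by
  have htor : ∀ x : G, x ∈ CommGroup.torsion G ↔ (e x).2 = 1 := by
    intro x
    rw [CommGroup.mem_torsion]
    constructor
    · intro hx
      exact hM _ ((MonoidHom.snd T M).isOfFinOrder (e.toMonoidHom.isOfFinOrder hx))
    · intro hx
      have h1 : IsOfFinOrder (e x) := by
        have : e x = ((e x).1, (1 : M)) := by
          ext
          · rfl
          · exact hx
        rw [this]
        obtain ⟨n, hn, hpow⟩ := isOfFinOrder_iff_pow_eq_one.mp (hT (e x).1)
        exact isOfFinOrder_iff_pow_eq_one.mpr ⟨n, hn, by simp [Prod.pow_def, hpow]⟩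
      have := e.symm.toMonoidHom.isOfFinOrder h1
      simpa using this
  -- second projection
  set q : G →* M := (MonoidHom.snd T M).comp e.toMonoidHom with hq
  have hqsurj : Surjective q := by
    intro m
    exact ⟨e.symm (1, m), by simp [hq]⟩
  have hker : q.ker = CommGroup.torsion G := by
    ext x
    rw [MonoidHom.mem_ker, htor]
    rfl
  constructor
  · exact ⟨((QuotientGroup.quotientMulEquivOfEq hker.symm).trans
      (QuotientGroup.quotientKerEquivOfSurjective q hqsurj))⟩
  · -- torsion G ≃* T
    have hj : ∀ x : ↥(CommGroup.torsion G), True := fun _ => trivial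
    let j : ↥(CommGroup.torsion G) →* T :=
      (MonoidHom.fst T M).comp (e.toMonoidHom.comp (CommGroup.torsion G).subtype)
    have hjbij : Bijective j := by
      constructor
      · intro x y hxy
        have hx2 : (e x).2 = 1 := (htor x).mp x.2
        have hy2 : (e y).2 = 1 := (htor y).mp y.2
        have : e (x : G) = e (y : G) := by
          ext
          · exact hxy
          · rw [hx2, hy2]
        exact Subtype.ext (e.injective this)
      · intro t
        have hmem : e.symm (t, 1) ∈ CommGroup.torsion G := by
          rw [htor, MulEquiv.apply_symm_apply]
        exact ⟨⟨e.symm (t, 1), hmem⟩, by simp [j]⟩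
    let jiso := MulEquiv.ofBijective j hjbij
    exact ⟨e.trans (MulEquiv.prodCongr jiso.symm (MulEquiv.refl M))⟩

/-- `Multiplicative (Additive G) ≃* G` -/
def multAdd (G : Type*) [CommGroup G] : Multiplicative (Additive G) ≃* G where
  toFun x := Additive.toMul (Multiplicative.toAdd x)
  invFun g := Multiplicative.ofAdd (Additive.ofMul g)
  left_inv _ := rfl
  right_inv _ := rfl
  map_mul' _ _ := rfl

/-- `Multiplicative (α × β) ≃* Multiplicative α × Multiplicative β` -/
def multProd (α β : Type*) [AddMonoid α] [AddMonoid β] :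
    Multiplicative (α × β) ≃* Multiplicative α × Multiplicative β where
  toFun x := (Multiplicative.ofAdd (Multiplicative.toAdd x).1,
    Multiplicative.ofAdd (Multiplicative.toAdd x).2)
  invFun p := Multiplicative.ofAdd (Multiplicative.toAdd p.1, Multiplicative.toAdd p.2)
  left_inv _ := rfl
  right_inv _ := rfl
  map_mul' _ _ := rfl

theorem finsupp_torsion_free {γ : Type*} (m : Multiplicative (γ →₀ ℤ)) (hm : IsOfFinOrder m) :
    m = 1 := by
  obtain ⟨n, hn, hpow⟩ := isOfFinOrder_iff_pow_eq_one.mp hm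
  have : (n : ℤ) • (Multiplicative.toAdd m) = 0 := by
    have := congrArg Multiplicative.toAdd hpow
    simpa [toAdd_pow] using this
  have hz : Multiplicative.toAdd m = 0 := by
    have hn' : (n : ℤ) ≠ 0 := by exact_mod_cast hn.ne'
    exact (smul_eq_zero_iff_right hn').mp this
  exact hz

end
end StmtAux

open Function NumberField IsDedekindDomain
open scoped nonZeroDivisors

namespace StmtAux

noncomputable section

variable (F : Type*) [Field F] [NumberField F]

theorem countF : Countable F := by
  have b := Module.finBasis ℚ F
  exact Countable.of_equiv _ b.repr.toEquiv.symm

theorem countO : Countable (𝓞 F) := by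
  haveI := countF F
  exact Function.Injective.countable (RingOfIntegers.coe_injective (K := F))

theorem countIdeal : Countable (Ideal (𝓞 F)) := by
  haveI := countO F
  apply Function.Surjective.countable (f := fun s : Finset (𝓞 F) => Ideal.span (s : Set (𝓞 F)))
  intro I
  obtain ⟨s, hs⟩ := (IsNoetherian.noetherian I : I.FG)
  exact ⟨s, hs⟩

theorem countV : Countable (HeightOneSpectrum (𝓞 F)) := by
  haveI := countIdeal F
  exact Function.Injective.countable
    (fun v w h => HeightOneSpectrum.ext h : Injective (HeightOneSpectrum.asIdeal (R := 𝓞 F)))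

/-- the fractional ideal generated by a unit of `F` -/
abbrev jdl (u : Fˣ) : FractionalIdeal (𝓞 F)⁰ F :=
  FractionalIdeal.spanSingleton (𝓞 F)⁰ (u : F)

theorem jdl_ne_zero (u : Fˣ) : jdl F u ≠ 0 := by
  rw [Ne, FractionalIdeal.spanSingleton_eq_zero_iff]
  exact u.ne_zero

/-- The divisor of a unit of `F`, as a finitely supported function on the height one
spectrum of `𝓞 F`. -/
def divisor (u : Fˣ) : HeightOneSpectrum (𝓞 F) →₀ ℤ :=
  Finsupp.ofSupportFinite (fun v => FractionalIdeal.count F v (jdl F u)) (by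
    have h := FractionalIdeal.finite_factors (jdl F u)
    rw [Filter.eventually_cofinite] at h
    exact h.subset (fun v hv => hv))

theorem divisor_apply (u : Fˣ) (v : HeightOneSpectrum (𝓞 F)) :
    divisor F u v = FractionalIdeal.count F v (jdl F u) := rfl

theorem divisor_mul (u w : Fˣ) : divisor F (u * w) = divisor F u + divisor F w := by
  ext v
  rw [Finsupp.add_apply, divisor_apply, divisor_apply, divisor_apply]
  have : jdl F (u * w) = jdl F u * jdl F w := by
    rw [FractionalIdeal.spanSingleton_mul_spanSingleton]
    show FractionalIdeal.spanSingleton _ _ = _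
    rw [Units.val_mul]
  rw [this, FractionalIdeal.count_mul F v (jdl_ne_zero F u) (jdl_ne_zero F w)]

theorem divisor_one : divisor F 1 = 0 := by
  have h := divisor_mul F 1 1
  rw [mul_one] at h
  exact (left_eq_add.mp h)

theorem jdl_eq_one_of_divisor_eq_zero {u : Fˣ} (h : divisor F u = 0) : jdl F u = 1 := by
  have h1 := FractionalIdeal.finprod_heightOneSpectrum_factorization' F (jdl_ne_zero F u)
  have h2 : ∀ v : HeightOneSpectrum (𝓞 F),
      (v.asIdeal : FractionalIdeal (𝓞 F)⁰ F) ^ (FractionalIdeal.count F v (jdl F u)) = 1 := by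
    intro v
    have : FractionalIdeal.count F v (jdl F u) = 0 := by
      have := congrArg (fun f : HeightOneSpectrum (𝓞 F) →₀ ℤ => f v) h
      simpa [divisor_apply] using this
    rw [this, zpow_zero]
  rw [← h1, finprod_congr h2, finprod_one]

theorem exists_unit_of_divisor_eq_zero {u : Fˣ} (h : divisor F u = 0) :
    ∃ w : (𝓞 F)ˣ, (algebraMap (𝓞 F) F) (w : 𝓞 F) = (u : F) := by
  have h1 : jdl F u = 1 := jdl_eq_one_of_divisor_eq_zero F h
  have hinv : divisor F u⁻¹ = 0 := by
    have h3 : divisor F u + divisor F u⁻¹ = divisor F (u * u⁻¹) := (divisor_mul F u u⁻¹).symm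
    rwa [mul_inv_cancel, divisor_one, h, zero_add] at h3
  have h2 : jdl F u⁻¹ = 1 := jdl_eq_one_of_divisor_eq_zero F hinv
  have hm1 : (u : F) ∈ (1 : FractionalIdeal (𝓞 F)⁰ F) := by
    rw [← h1]; exact FractionalIdeal.mem_spanSingleton_self _ _
  have hm2 : ((u⁻¹ : Fˣ) : F) ∈ (1 : FractionalIdeal (𝓞 F)⁰ F) := by
    rw [← h2]; exact FractionalIdeal.mem_spanSingleton_self _ _
  obtain ⟨r, hr⟩ := (FractionalIdeal.mem_one_iff _).mp hm1
  obtain ⟨r', hr'⟩ := (FractionalIdeal.mem_one_iff _).mp hm2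
  have hinj := RingOfIntegers.coe_injective (K := F)
  have hrr' : r * r' = 1 := by
    apply hinj
    rw [map_mul, hr, hr', map_one]
    exact u.mul_inv
  have hr'r : r' * r = 1 := by rw [mul_comm]; exact hrr'
  exact ⟨⟨r, r', hrr', hr'r⟩, hr⟩

end
end StmtAux

namespace StmtAux
noncomputable section
open Function NumberField IsDedekindDomain
open scoped nonZeroDivisors

variable (F : Type*) [Field F] [NumberField F]

set_option maxHeartbeats 2000000 in
set_option synthInstance.maxHeartbeats 500000 in
theorem main (E : Subgroup Fˣ) :
    ∃ S : Type, Countable S ∧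
      Nonempty ((↥E ⧸ CommGroup.torsion ↥E) ≃* Multiplicative (S →₀ ℤ)) ∧
      Nonempty (↥E ≃* ↥(CommGroup.torsion ↥E) × Multiplicative (S →₀ ℤ)) := by
  classical
  -- the divisor homomorphism on `Additive ↥E`
  let f₀ : Additive ↥E →+ (HeightOneSpectrum (𝓞 F) →₀ ℤ) :=
    AddMonoidHom.mk' (fun a => divisor F ((Additive.toMul a : ↥E) : Fˣ))
      (fun a b => divisor_mul F _ _)
  let f := f₀.toIntLinearMap
  haveI := countV F
  obtain ⟨S₂, hS₂, ⟨e₂⟩⟩ := exists_equiv (LinearMap.range f)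
  obtain ⟨esp⟩ := split e₂ f.rangeRestrict (LinearMap.surjective_rangeRestrict f)
  set Kf := LinearMap.ker f with hKf
  have hker : ∀ k : ↥Kf, divisor F ((Additive.toMul (k : Additive ↥E) : ↥E) : Fˣ) = 0 :=
    fun k => LinearMap.mem_ker.mp k.2
  let υ : ↥Kf → (𝓞 F)ˣ := fun k => (exists_unit_of_divisor_eq_zero F (hker k)).choose
  have hυ : ∀ k : ↥Kf, (algebraMap (𝓞 F) F) ((υ k : (𝓞 F)ˣ) : 𝓞 F)
      = (((Additive.toMul (k : Additive ↥E) : ↥E) : Fˣ) : F) :=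
    fun k => (exists_unit_of_divisor_eq_zero F (hker k)).choose_spec
  have hυmul : ∀ k l : ↥Kf, υ (k + l) = υ k * υ l := by
    intro k l
    apply Units.ext
    apply RingOfIntegers.coe_injective (K := F)
    rw [Units.val_mul, map_mul, hυ, hυ, hυ]
    rfl
  let κ₀ : ↥Kf →+ Additive ((𝓞 F)ˣ ⧸ NumberField.Units.torsion F) :=
    AddMonoidHom.mk' (fun k => Additive.ofMul (QuotientGroup.mk (s := NumberField.Units.torsion F) (υ k)))
      (by intro k l; rw [hυmul]; rfl)
  let κ := AddMonoidHom.toIntLinearMap (M := ↥Kf) (M₂ := Additive ((𝓞 F)ˣ ⧸ NumberField.Units.torsion F)) κ₀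
  obtain ⟨nr, b₂⟩ := Submodule.basisOfPid (NumberField.Units.basisModTorsion F) (LinearMap.range κ)
  obtain ⟨esp2⟩ := split b₂.repr κ.rangeRestrict (LinearMap.surjective_rangeRestrict κ)
  set T₀ := LinearMap.ker κ with hT₀
  -- assemble the additive equivalence
  let E₁ : Additive ↥E ≃+ ↥Kf × ↥(LinearMap.range f) :=
    esp.trans (AddEquiv.prodCongr (LinearEquiv.ofEq _ _ f.ker_rangeRestrict).toAddEquiv
      (AddEquiv.refl _))
  let E₂ : ↥Kf ≃+ ↥T₀ × ↥(LinearMap.range κ) :=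
    esp2.trans (AddEquiv.prodCongr (LinearEquiv.ofEq _ _ κ.ker_rangeRestrict).toAddEquiv
      (AddEquiv.refl _))
  let Efree : ↥(LinearMap.range κ) × ↥(LinearMap.range f) ≃+ ((Fin nr ⊕ S₂) →₀ ℤ) :=
    (AddEquiv.prodCongr b₂.repr.toAddEquiv e₂.toAddEquiv).trans
      ((Finsupp.sumFinsuppLEquivProdFinsupp ℤ).symm.toAddEquiv)
  let E₄ : Additive ↥E ≃+ ↥T₀ × ((Fin nr ⊕ S₂) →₀ ℤ) :=
    (E₁.trans ((AddEquiv.prodCongr E₂ (AddEquiv.refl _)).trans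
      AddEquiv.prodAssoc)).trans (AddEquiv.prodCongr (AddEquiv.refl _) Efree)
  -- multiplicative version
  let e : ↥E ≃* Multiplicative ↥T₀ × Multiplicative ((Fin nr ⊕ S₂) →₀ ℤ) :=
    ((multAdd ↥E).symm.trans (AddEquiv.toMultiplicative E₄)).trans (multProd _ _)
  -- T is a torsion group
  have hT : ∀ t : Multiplicative ↥T₀, IsOfFinOrder t := by
    intro t
    set k : ↥Kf := ((Multiplicative.toAdd t : ↥T₀) : ↥Kf) with hk
    have hκ0 : κ₀ k = 0 := LinearMap.mem_ker.mp (Multiplicative.toAdd t).2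
    have hq1 : (QuotientGroup.mk (υ k) : (𝓞 F)ˣ ⧸ NumberField.Units.torsion F) = 1 := hκ0
    have hmem : υ k ∈ NumberField.Units.torsion F := (QuotientGroup.eq_one_iff _).mp hq1
    obtain ⟨m, hm, hpow⟩ := isOfFinOrder_iff_pow_eq_one.mp hmem
    refine isOfFinOrder_iff_pow_eq_one.mpr ⟨m, hm, ?_⟩
    set x : ↥E := Additive.toMul (k : Additive ↥E) with hx
    have hx1 : x ^ m = 1 := by
      have hval : (((x ^ m : ↥E) : Fˣ) : F) = 1 := by
        push_cast
        rw [← hυ k, ← map_pow, ← Units.val_pow_eq_pow_val, hpow, Units.val_one, map_one]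
      have : ((x ^ m : ↥E) : Fˣ) = 1 := Units.ext hval
      exact OneMemClass.coe_eq_one.mp this
    have h1 : m • (k : Additive ↥E) = 0 := by
      apply Additive.toMul.injective
      rw [toMul_nsmul, toMul_zero]
      exact hx1
    have h2 : m • k = (0 : ↥Kf) := by
      apply Subtype.ext
      rw [AddSubmonoidClass.coe_nsmul, ZeroMemClass.coe_zero]
      exact h1
    have h3 : m • (Multiplicative.toAdd t) = (0 : ↥T₀) := by
      apply Subtype.ext
      rw [AddSubmonoidClass.coe_nsmul, ZeroMemClass.coe_zero]
      exact h2
    apply Multiplicative.toAdd.injective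
    rw [toAdd_pow, toAdd_one]
    exact h3
  obtain ⟨hq, hp⟩ := final_abstract e hT (fun m hm => finsupp_torsion_free m hm)
  exact ⟨Fin nr ⊕ S₂, inferInstance, hq, hp⟩

end
end StmtAux



variable (F : Type*) [Field F] [NumberField F] (σ : F →+* ℂ)

/-- The subgroup `E = {x ∈ F^× : |σ(x)| = 1}` of the unit group of `F`. -/
def normOneSubgroup : Subgroup Fˣ where
  carrier := {u : Fˣ | ‖σ (u : F)‖ = 1}
  one_mem' := by simp
  mul_mem' := by
    intro a b ha hb
    simp only [Set.mem_setOf_eq, Units.val_mul, map_mul, norm_mul] at *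
    rw [ha, hb, mul_one]
  inv_mem' := by
    intro a ha
    simp only [Set.mem_setOf_eq] at *
    have : (σ ((a⁻¹ : Fˣ) : F)) * σ ((a : Fˣ) : F) = 1 := by
      rw [← map_mul]; simp
    have habs : ‖σ ((a⁻¹ : Fˣ) : F) * σ ((a : Fˣ) : F)‖ = ‖(1 : ℂ)‖ := by rw [this]
    rw [norm_mul, ha, mul_one, norm_one] at habs
    exact habs

/-- `E/μ_F` is free abelian of at most countable rank, and consequently
`E ≅ μ_F ⊕ ℤ^(S)` for some at most countable set `S`.  Here `μ_F`, the group of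
roots of unity of `F`, is the torsion subgroup of `E`. -/
theorem stmt_5 :
    ∃ S : Type, Countable S ∧
      Nonempty ((↥(normOneSubgroup F σ) ⧸ CommGroup.torsion ↥(normOneSubgroup F σ)) ≃*
        Multiplicative (S →₀ ℤ)) ∧
      Nonempty (↥(normOneSubgroup F σ) ≃*
        ↥(CommGroup.torsion ↥(normOneSubgroup F σ)) × Multiplicative (S →₀ ℤ)) := by
  obtain ⟨S, hS, h1, h2⟩ := StmtAux.main F (normOneSubgroup F σ)
  exact ⟨S, hS, h1, h2⟩
end

section
/- Let F = ℚ(∛2) with any complex (non-real) embedding σ : F → ℂ. Then {x ∈ F : |σ(x)| = 1} = {±1}. -/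
open Polynomial Module

lemma two_not_cube_aux (b : ℚ) : b ^ 3 ≠ 2 := by
  intro hb
  have hb0 : b ≠ 0 := by rintro rfl; norm_num at hb
  haveI : Fact (Nat.Prime 2) := ⟨Nat.prime_two⟩
  have h1 : padicValRat 2 (b ^ 3) = 3 * padicValRat 2 b := padicValRat.pow b
  have h2 : padicValRat 2 (2 : ℚ) = 1 := by
    have := padicValRat.self (p := 2) (by norm_num)
    simpa using this
  rw [hb, h2] at h1
  omega

/-- Let `F = ℚ(∛2)` with a complex (non-real) embedding `σ : F → ℂ`.  Then
`{x ∈ F : |σ(x)| = 1} = {±1}`. -/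
theorem stmt_6 (F : Type*) [Field F] [NumberField F] [Algebra ℚ F]
    (α : F) (hα : α ^ 3 = 2) (hgen : Algebra.adjoin ℚ {α} = ⊤)
    (σ : F →+* ℂ) (hσ : (σ α).im ≠ 0) :
    {x : F | ‖σ x‖ = 1} = {1, -1} := by
  have hint : IsIntegral ℚ α := IsIntegral.of_finite ℚ α
  have hirr : Irreducible (X ^ 3 - C (2 : ℚ)) :=
    X_pow_sub_C_irreducible_of_prime (by norm_num) (fun b => two_not_cube_aux b)
  have hmin : minpoly ℚ α = X ^ 3 - C 2 := by
    refine (minpoly.eq_of_irreducible_of_monic hirr ?_ ?_).symm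
    · simp [hα]
    · have := monic_X_pow_sub_C (2 : ℚ) (n := 3) (by norm_num)
      exact this
  have hdeg : finrank ℚ F = 3 := by
    have h1 : (IntermediateField.adjoin ℚ {α}).toSubalgebra = Algebra.adjoin ℚ {α} :=
      IntermediateField.adjoin_simple_toSubalgebra_of_isAlgebraic hint.isAlgebraic
    have h2 : IntermediateField.adjoin ℚ {α} = ⊤ := by
      apply IntermediateField.toSubalgebra_injective
      rw [h1, hgen]
      rfl
    have h3 : finrank ℚ (IntermediateField.adjoin ℚ ({α} : Set F)) =
        (minpoly ℚ α).natDegree := IntermediateField.adjoin.finrank hint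
    rw [h2, hmin] at h3
    have h4 : (X ^ 3 - C (2 : ℚ)).natDegree = 3 := by
      compute_degree!
    rw [h4] at h3
    rw [← h3]
    exact (IntermediateField.finrank_top').symm
  classical
  have hcard : Fintype.card (F →ₐ[ℚ] ℂ) = 3 := by
    rw [AlgHom.card]; exact hdeg
  set σ₁ : F →ₐ[ℚ] ℂ := σ.toRatAlgHom with hσ₁
  set σ₂ : F →ₐ[ℚ] ℂ := ((starRingEnd ℂ).comp σ).toRatAlgHom with hσ₂
  have happ₁ : ∀ y : F, σ₁ y = σ y := fun y => rfl
  have happ₂ : ∀ y : F, σ₂ y = (starRingEnd ℂ) (σ y) := fun y => rfl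
  have hne : σ₁ ≠ σ₂ := by
    intro h
    have h' := congrArg (fun f => (f α).im) h
    simp only [happ₁, happ₂, Complex.conj_im] at h'
    exact hσ (by linarith)
  obtain ⟨τ, hτ⟩ : ∃ τ : F →ₐ[ℚ] ℂ, (Finset.univ \ {σ₁, σ₂}) = {τ} := by
    apply Finset.card_eq_one.mp
    rw [Finset.card_sdiff_of_subset (Finset.subset_univ _), Finset.card_univ, hcard,
      Finset.card_insert_of_notMem (by simpa using hne), Finset.card_singleton]
  have hτinj : Function.Injective τ := τ.toRingHom.injective
  ext x
  simp only [Set.mem_setOf_eq, Set.mem_insert_iff, Set.mem_singleton_iff]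
  constructor
  · intro hx
    have hprod : (algebraMap ℚ ℂ) (Algebra.norm ℚ x) = τ x * (σ₁ x * σ₂ x) := by
      rw [Algebra.norm_eq_prod_embeddings,
        ← Finset.prod_sdiff (Finset.subset_univ ({σ₁, σ₂} : Finset (F →ₐ[ℚ] ℂ))), hτ,
        Finset.prod_singleton, Finset.prod_insert (by simpa using hne),
        Finset.prod_singleton]
    have h12 : σ₁ x * σ₂ x = 1 := by
      rw [happ₁, happ₂, Complex.mul_conj, Complex.normSq_eq_norm_sq, hx]
      norm_num
    rw [h12, mul_one] at hprod
    set q : ℚ := Algebra.norm ℚ x with hq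
    have hxq : x = algebraMap ℚ F q := by
      apply hτinj
      rw [AlgHom.commutes, ← hprod]
    have habs : |q| = 1 := by
      have h1 : σ x = (q : ℂ) := by
        rw [hxq, ← happ₁, AlgHom.commutes]; exact eq_ratCast (algebraMap ℚ ℂ) q
      rw [h1, show ((q:ℂ)) = (((q:ℝ)):ℂ) by push_cast; ring, Complex.norm_real, Real.norm_eq_abs,
        ← Rat.cast_abs] at hx
      exact_mod_cast hx
    rcases abs_eq (by norm_num : (0:ℚ) ≤ 1) |>.mp habs with h | h
    · left; rw [hxq, h, map_one]
    · right; rw [hxq, h]; simp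
  · rintro (rfl | rfl) <;> simp
end

section
/- Let K be an integral domain with a multiplicative norm |·| : K → ℝ≥0 and O(n) = {x ∈ Kⁿ : ∑ᵢ|xᵢ| ≤ 1}. Suppose A is an n×n matrix over K such that every column of A lies in O(n) (i.e., column L¹-norms are ≤ 1) and A is invertible with A⁻¹ also having all columns in O(n). Then A has exactly one nonzero entry in each row and each column, and each nonzero entry has norm exactly 1. -/
/-- Let `K` be an integral domain with a multiplicative norm and
`O(n) = {x ∈ Kⁿ : ∑ᵢ v xᵢ ≤ 1}`.  If `A` is an invertible `n×n` matrix over `K`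
such that all columns of `A` and of `A⁻¹` lie in `O(n)`, then `A` has exactly
one nonzero entry in each row and each column, and each nonzero entry has norm
exactly `1`. -/
theorem stmt_9 (K : Type*) [CommRing K] [IsDomain K] (v : K → ℝ)
    (hv0 : ∀ x, 0 ≤ v x) (hv_eq0 : ∀ x, v x = 0 ↔ x = 0)
    (hv_mul : ∀ x y, v (x * y) = v x * v y)
    (hv_add : ∀ x y, v (x + y) ≤ v x + v y)
    (n : ℕ) (A B : Matrix (Fin n) (Fin n) K)
    (hAB : A * B = 1) (hBA : B * A = 1)
    (hA : ∀ j, ∑ i, v (A i j) ≤ 1) (hB : ∀ j, ∑ i, v (B i j) ≤ 1) :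
    (∀ j, ∃! i, A i j ≠ 0) ∧ (∀ i, ∃! j, A i j ≠ 0) ∧
      (∀ i j, A i j ≠ 0 → v (A i j) = 1) := by
  have v0 : v 0 = 0 := (hv_eq0 0).2 rfl
  have v1 : v 1 = 1 := by
    have h := hv_mul 1 1
    rw [one_mul] at h
    have h1 : v 1 ≠ 0 := fun h0 => one_ne_zero ((hv_eq0 1).1 h0)
    have h2 : v 1 * (v 1 - 1) = 0 := by nlinarith
    rcases mul_eq_zero.1 h2 with h3 | h3
    · exact absurd h3 h1
    · linarith
  have vsum : ∀ (s : Finset (Fin n)) (f : Fin n → K),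
      v (∑ x ∈ s, f x) ≤ ∑ x ∈ s, v (f x) := by
    intro s f
    induction s using Finset.induction with
    | empty => simp [v0]
    | insert _ _ hx ih =>
      rw [Finset.sum_insert hx, Finset.sum_insert hx]
      exact le_trans (hv_add _ _) (by linarith)
  have ventry : ∀ (M : Matrix (Fin n) (Fin n) K),
      (∀ j, ∑ i, v (M i j) ≤ 1) → ∀ i j, v (M i j) ≤ 1 := by
    intro M hM i j
    exact le_trans (Finset.single_le_sum (fun k _ => hv0 (M k j)) (Finset.mem_univ i)) (hM j)
  -- key lemma: if N * M = 1 and both have columns in O(n), then M k i ≠ 0 → v (N i k) = 1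
  have key : ∀ (M N : Matrix (Fin n) (Fin n) K), N * M = 1 →
      (∀ j, ∑ i, v (M i j) ≤ 1) → (∀ j, ∑ i, v (N i j) ≤ 1) →
      ∀ i k, M k i ≠ 0 → v (N i k) = 1 := by
    intro M N hNM hM hN i k hk
    have h11 : (N * M) i i = 1 := by rw [hNM]; simp [Matrix.one_apply]
    have h1 : (1 : ℝ) ≤ ∑ x, v (N i x) * v (M x i) := by
      calc (1 : ℝ) = v ((N * M) i i) := by rw [h11, v1]
        _ = v (∑ x, N i x * M x i) := by rw [Matrix.mul_apply]
        _ ≤ ∑ x, v (N i x * M x i) := vsum _ _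
        _ = ∑ x, v (N i x) * v (M x i) := by simp [hv_mul]
    have h2 : ∑ x, v (N i x) * v (M x i) ≤ ∑ x, v (M x i) :=
      Finset.sum_le_sum fun x _ => by
        nlinarith [ventry N hN i x, hv0 (M x i), hv0 (N i x)]
    have h3 := hM i
    have hterm : ∀ x ∈ Finset.univ, (0:ℝ) ≤ (1 - v (N i x)) * v (M x i) :=
      fun x _ => mul_nonneg (by linarith [ventry N hN i x]) (hv0 _)
    have h4 : ∑ x, (1 - v (N i x)) * v (M x i) = 0 := by
      have heq : ∑ x, (1 - v (N i x)) * v (M x i)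
          = ∑ x, v (M x i) - ∑ x, v (N i x) * v (M x i) := by
        rw [← Finset.sum_sub_distrib]
        exact Finset.sum_congr rfl fun x _ => by ring
      have hle : ∑ x, (1 - v (N i x)) * v (M x i) ≤ 0 := by rw [heq]; linarith
      exact le_antisymm hle (Finset.sum_nonneg hterm)
    have h5 := (Finset.sum_eq_zero_iff_of_nonneg hterm).1 h4 k (Finset.mem_univ k)
    rcases mul_eq_zero.1 h5 with h6 | h6
    · linarith
    · exact absurd ((hv_eq0 _).1 h6) hk
  have keyAB := key A B hBA hA hB  -- A k i ≠ 0 → v (B i k) = 1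
  have keyBA := key B A hAB hB hA  -- B k i ≠ 0 → v (A i k) = 1
  -- existence of a nonzero entry in each row / column
  have exrow : ∀ (M N : Matrix (Fin n) (Fin n) K), M * N = 1 → ∀ i, ∃ k, M i k ≠ 0 := by
    intro M N hMN i
    by_contra h
    push_neg at h
    have h11 : (M * N) i i = 1 := by rw [hMN]; simp [Matrix.one_apply]
    rw [Matrix.mul_apply] at h11
    have : ∑ x, M i x * N x i = 0 := Finset.sum_eq_zero fun x _ => by rw [h x, zero_mul]
    rw [this] at h11
    exact one_ne_zero h11.symm
  have excol : ∀ (M N : Matrix (Fin n) (Fin n) K), M * N = 1 → ∀ i, ∃ k, N k i ≠ 0 := by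
    intro M N hMN i
    by_contra h
    push_neg at h
    have h11 : (M * N) i i = 1 := by rw [hMN]; simp [Matrix.one_apply]
    rw [Matrix.mul_apply] at h11
    have : ∑ x, M i x * N x i = 0 := Finset.sum_eq_zero fun x _ => by rw [h x, mul_zero]
    rw [this] at h11
    exact one_ne_zero h11.symm
  -- nonzero entries of A have norm 1
  have hnorm : ∀ i j, A i j ≠ 0 → v (A i j) = 1 := by
    intro i j hij
    have hB1 : v (B j i) = 1 := keyAB j i hij
    have hBne : B j i ≠ 0 := fun h0 => by rw [(hv_eq0 _).2 h0] at hB1; norm_num at hB1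
    exact keyBA i j hBne
  refine ⟨?_, ?_, hnorm⟩
  · intro j
    obtain ⟨i, hi⟩ := excol B A hBA j
    refine ⟨i, hi, ?_⟩
    intro i' hi'
    by_contra hne
    have h1 : v (A i j) = 1 := hnorm i j hi
    have h2 : v (A i' j) = 1 := hnorm i' j hi'
    have hp : (∑ x ∈ ({i', i} : Finset (Fin n)), v (A x j)) = v (A i' j) + v (A i j) :=
      Finset.sum_pair hne
    have : v (A i' j) + v (A i j) ≤ ∑ x, v (A x j) := by
      rw [← hp]
      exact Finset.sum_le_sum_of_subset_of_nonneg (Finset.subset_univ _)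
        (fun x _ _ => hv0 _)
    have := hA j
    linarith
  · intro i
    obtain ⟨j, hj⟩ := exrow A B hAB i
    refine ⟨j, hj, ?_⟩
    intro j' hj'
    by_contra hne
    have h1 : v (B j i) = 1 := keyAB j i hj
    have h2 : v (B j' i) = 1 := keyAB j' i hj'
    have hp : (∑ x ∈ ({j', j} : Finset (Fin n)), v (B x i)) = v (B j' i) + v (B j i) :=
      Finset.sum_pair hne
    have : v (B j' i) + v (B j i) ≤ ∑ x, v (B x i) := by
      rw [← hp]
      exact Finset.sum_le_sum_of_subset_of_nonneg (Finset.subset_univ _)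
        (fun x _ _ => hv0 _)
    have := hB i
    linarith
end

section
/- Let F be a number field, σ₁, σ₂ : F → ℂ two embeddings, and O = {x ∈ F : |σ₁(x)| ≤ 1 and |σ₂(x)| ≤ 1}. Then 𝔭 := {x ∈ O : |σ₁(x)σ₂(x)| < 1} is closed under the operation: if s₁,...,sₙ ∈ 𝔭 and (x₁,...,xₙ) ∈ Fⁿ with ∑ⱼ|σᵢ(xⱼ)| ≤ 1 for i = 1,2, then ∑ⱼ sⱼxⱼ ∈ 𝔭; and the complement O \ 𝔭 = {x ∈ O : |σ₁(x)| = |σ₂(x)| = 1} is multiplicatively closed and contains 1. -/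
private lemma sum_bound {F : Type*} [Field F] {n : ℕ} (σ : F →+* ℂ)
    (s x : Fin n → F) (hs : ∀ j, ‖σ (s j)‖ ≤ 1) :
    ‖σ (∑ j, s j * x j)‖ ≤ ∑ j, ‖σ (x j)‖ := by
  rw [map_sum]
  refine (norm_sum_le _ _).trans (Finset.sum_le_sum fun j _ => ?_)
  rw [map_mul, norm_mul]
  calc ‖σ (s j)‖ * ‖σ (x j)‖
      ≤ 1 * ‖σ (x j)‖ := by
        exact mul_le_mul_of_nonneg_right (hs j) (norm_nonneg _)
    _ = ‖σ (x j)‖ := one_mul _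

private lemma sum_bound_strict {F : Type*} [Field F] {n : ℕ} (σ : F →+* ℂ)
    (s x : Fin n → F) (hs : ∀ j, ‖σ (s j)‖ ≤ 1)
    (j₀ : Fin n) (hj : ‖σ (s j₀)‖ < 1) (hx : x j₀ ≠ 0) :
    ‖σ (∑ j, s j * x j)‖ < ∑ j, ‖σ (x j)‖ := by
  rw [map_sum]
  refine lt_of_le_of_lt (norm_sum_le _ _) ?_
  refine Finset.sum_lt_sum (fun j _ => ?_) ⟨j₀, Finset.mem_univ _, ?_⟩
  · rw [map_mul, norm_mul]
    calc ‖σ (s j)‖ * ‖σ (x j)‖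
        ≤ 1 * ‖σ (x j)‖ :=
          mul_le_mul_of_nonneg_right (hs j) (norm_nonneg _)
      _ = ‖σ (x j)‖ := one_mul _
  · rw [map_mul, norm_mul]
    have hx' : 0 < ‖σ (x j₀)‖ := by
      simpa [norm_pos_iff, map_ne_zero] using hx
    calc ‖σ (s j₀)‖ * ‖σ (x j₀)‖
        < 1 * ‖σ (x j₀)‖ := by
          exact mul_lt_mul_of_pos_right hj hx'
      _ = ‖σ (x j₀)‖ := one_mul _

/-- For a number field `F` with embeddings `σ₁, σ₂ : F → ℂ` and
`O = {x : |σ₁ x| ≤ 1 ∧ |σ₂ x| ≤ 1}`, the set `𝔭 = {x ∈ O : |σ₁(x)σ₂(x)| < 1}`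
is closed under `O`-linear combinations, and its complement in `O` equals
`{x ∈ O : |σ₁ x| = |σ₂ x| = 1}`, which is multiplicatively closed and
contains `1`. -/
theorem stmt_12 (F : Type*) [Field F] [NumberField F] (σ₁ σ₂ : F →+* ℂ)
    (O : Set F) (hO : O = {x | ‖σ₁ x‖ ≤ 1 ∧ ‖σ₂ x‖ ≤ 1})
    (p : Set F) (hp : p = {x ∈ O | ‖σ₁ x * σ₂ x‖ < 1}) :
    (∀ (n : ℕ) (s x : Fin n → F),
        (∀ j, s j ∈ p) →
        (∑ j, ‖σ₁ (x j)‖) ≤ 1 →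
        (∑ j, ‖σ₂ (x j)‖) ≤ 1 →
        (∑ j, s j * x j) ∈ p) ∧
    (O \ p = {x ∈ O | ‖σ₁ x‖ = 1 ∧ ‖σ₂ x‖ = 1}) ∧
    (∀ x ∈ O \ p, ∀ y ∈ O \ p, x * y ∈ O \ p) ∧
    (1 : F) ∈ O \ p := by
  subst hO hp
  refine ⟨?_, ?_, ?_, ?_⟩
  · intro n s x hs h1 h2
    have hs1 : ∀ j, ‖σ₁ (s j)‖ ≤ 1 := fun j => (hs j).1.1
    have hs2 : ∀ j, ‖σ₂ (s j)‖ ≤ 1 := fun j => (hs j).1.2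
    have hA : ‖σ₁ (∑ j, s j * x j)‖ ≤ 1 :=
      (sum_bound σ₁ s x hs1).trans h1
    have hB : ‖σ₂ (∑ j, s j * x j)‖ ≤ 1 :=
      (sum_bound σ₂ s x hs2).trans h2
    refine ⟨⟨hA, hB⟩, ?_⟩
    rw [norm_mul]
    by_cases hx : ∀ j, x j = 0
    · have hz : (∑ j, s j * x j) = 0 := Finset.sum_eq_zero fun j _ => by
        rw [hx j, mul_zero]
      rw [hz]; simp
    · push_neg at hx
      obtain ⟨j₀, hj₀⟩ := hx
      have hprod := (hs j₀).2
      rw [norm_mul] at hprod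
      rcases lt_or_ge (‖σ₁ (s j₀)‖) 1 with h | h
      · have : ‖σ₁ (∑ j, s j * x j)‖ < 1 :=
          lt_of_lt_of_le (sum_bound_strict σ₁ s x hs1 j₀ h hj₀) h1
        calc ‖σ₁ (∑ j, s j * x j)‖ * ‖σ₂ (∑ j, s j * x j)‖
            ≤ ‖σ₁ (∑ j, s j * x j)‖ * 1 :=
              mul_le_mul_of_nonneg_left hB (norm_nonneg _)
          _ < 1 := by rwa [mul_one]
      · have h2' : ‖σ₂ (s j₀)‖ < 1 := by
          by_contra hc
          push_neg at hc
          have : (1:ℝ) * 1 ≤ ‖σ₁ (s j₀)‖ * ‖σ₂ (s j₀)‖ :=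
            mul_le_mul h hc (by norm_num) (norm_nonneg _)
          linarith
        have : ‖σ₂ (∑ j, s j * x j)‖ < 1 :=
          lt_of_lt_of_le (sum_bound_strict σ₂ s x hs2 j₀ h2' hj₀) h2
        calc ‖σ₁ (∑ j, s j * x j)‖ * ‖σ₂ (∑ j, s j * x j)‖
            ≤ 1 * ‖σ₂ (∑ j, s j * x j)‖ :=
              mul_le_mul_of_nonneg_right hA (norm_nonneg _)
          _ < 1 := by rwa [one_mul]
  · ext x
    simp only [Set.mem_diff, Set.mem_setOf_eq, not_and, not_lt]
    constructor
    · rintro ⟨⟨h1, h2⟩, h⟩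
      have h' := h ⟨h1, h2⟩
      rw [norm_mul] at h'
      have e1 : ‖σ₁ x‖ = 1 := by
        nlinarith [norm_nonneg (σ₁ x), norm_nonneg (σ₂ x)]
      have e2 : ‖σ₂ x‖ = 1 := by
        nlinarith [norm_nonneg (σ₁ x), norm_nonneg (σ₂ x)]
      exact ⟨⟨h1, h2⟩, e1, e2⟩
    · rintro ⟨hO, e1, e2⟩
      exact ⟨hO, fun _ => by rw [norm_mul, e1, e2]; norm_num⟩
  · rintro x ⟨⟨hx1, hx2⟩, hx⟩ y ⟨⟨hy1, hy2⟩, hy⟩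
    simp only [Set.mem_setOf_eq, not_and, not_lt] at hx hy
    have ex := hx ⟨hx1, hx2⟩
    have ey := hy ⟨hy1, hy2⟩
    rw [norm_mul] at ex ey
    have e1 : ‖σ₁ x‖ = 1 := by
      nlinarith [norm_nonneg (σ₁ x), norm_nonneg (σ₂ x)]
    have e2 : ‖σ₂ x‖ = 1 := by
      nlinarith [norm_nonneg (σ₁ x), norm_nonneg (σ₂ x)]
    have f1 : ‖σ₁ y‖ = 1 := by
      nlinarith [norm_nonneg (σ₁ y), norm_nonneg (σ₂ y)]
    have f2 : ‖σ₂ y‖ = 1 := by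
      nlinarith [norm_nonneg (σ₁ y), norm_nonneg (σ₂ y)]
    constructor
    · constructor <;> simp [map_mul, e1, e2, f1, f2]
    · simp only [Set.mem_setOf_eq, not_and, not_lt]
      intro _
      simp [map_mul, e1, e2, f1, f2]
  · constructor
    · constructor <;> simp
    · simp only [Set.mem_setOf_eq, not_and, not_lt]
      intro _
      simp
end

section
/- There exists a number field F of the form ℚ[t]/(p(t)) with irreducible p and two embeddings σ₁, σ₂ : F → ℂ such that the inclusion 𝔭₁ ⊆ 𝔭 is strict, where 𝔭₁ = {x ∈ O : |σ₁(x)| < 1}, 𝔭 = {x ∈ O : |σ₁(x)σ₂(x)| < 1}, and O = {x ∈ F : |σᵢ(x)| ≤ 1, i = 1,2}. Concretely: there is an irreducible polynomial p over ℚ with roots a₁, a₂ ∈ ℂ satisfying |a₁| = 1 and |a₂| < 1. -/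
open Polynomial

section Aux

/-- Structure of a polynomial of `natDegree ≤ 2`. -/
lemma aux_quadStruct {R : Type*} [Semiring R] {p : R[X]} (h : p.natDegree ≤ 2) :
    p = C (p.coeff 2) * X ^ 2 + C (p.coeff 1) * X + C (p.coeff 0) := by
  ext n
  rcases n with _ | _ | _ | n
  · simp [coeff_C]
  · simp [coeff_C]
  · simp [coeff_C, coeff_X]
  · have hlt : p.natDegree < n + 3 := by omega
    rw [coeff_eq_zero_of_natDegree_lt hlt]
    simp [coeff_C, coeff_X_pow]

/-- The reduction of our quartic mod 2. -/
noncomputable def auxF2 : (ZMod 2)[X] := X^4 + X^3 + X^2 + X + 1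

lemma auxF2_natDegree : auxF2.natDegree = 4 := by unfold auxF2; compute_degree!

lemma auxF2_ne_zero : auxF2 ≠ 0 := fun h => by
  have := auxF2_natDegree; rw [h] at this; simp at this

lemma aux_zmod2 : ∀ r : ZMod 2, r^4 + r^3 + r^2 + r + 1 ≠ 0 := by decide

lemma auxF2_no_root (r : ZMod 2) : eval r auxF2 ≠ 0 := by
  have h : eval r auxF2 = r^4 + r^3 + r^2 + r + 1 := by unfold auxF2; simp
  rw [h]; exact aux_zmod2 r

lemma aux_no_linear_factor {a b : (ZMod 2)[X]} (hab : auxF2 = a * b)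
    (ha : a.natDegree = 1) : False := by
  have ha0 : a ≠ 0 := fun h => by simp [h] at ha
  have ha1 : a.coeff 1 ≠ 0 := by
    have := mt leadingCoeff_eq_zero.mp ha0
    rwa [leadingCoeff, ha] at this
  have hstruct := eq_X_add_C_of_natDegree_le_one (le_of_eq ha)
  set r : ZMod 2 := -(a.coeff 0) / (a.coeff 1) with hr
  have haroot : eval r a = 0 := by
    rw [hstruct]; simp [hr]; field_simp; ring_nf; rw [show (2 : ZMod 2) = 0 by decide, mul_zero]
  have : eval r auxF2 = 0 := by rw [hab, eval_mul, haroot, zero_mul]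
  exact auxF2_no_root r this

lemma aux_quad_factor {a : (ZMod 2)[X]} (h2 : a.natDegree = 2) (hl : a.coeff 2 ≠ 0)
    (hnoroot : ∀ r : ZMod 2, eval r a ≠ 0) : a = X ^ 2 + X + 1 := by
  have hc2 : a.coeff 2 = 1 := by revert hl; generalize a.coeff 2 = x; revert x; decide
  have hs := aux_quadStruct (le_of_eq h2)
  have h0 : a.coeff 0 ≠ 0 := by
    intro h
    apply hnoroot 0
    rw [hs]; simp [h]
  have h0' : a.coeff 0 = 1 := by revert h0; generalize a.coeff 0 = x; revert x; decide
  have h1 : a.coeff 1 = 1 := by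
    have := hnoroot 1
    rw [hs] at this; simp [hc2, h0'] at this
    revert this; generalize a.coeff 1 = x; revert x; decide
  rw [hs, hc2, h0', h1]; simp

lemma aux_two_eq_zero : (2 : (ZMod 2)[X]) = 0 := by
  have h := map_ofNat (C : ZMod 2 →+* (ZMod 2)[X]) 2
  rw [← h, show ((OfNat.ofNat 2 : ZMod 2)) = 0 by decide, map_zero]

lemma auxF2_irreducible : Irreducible auxF2 := by
  constructor
  · intro h
    rw [Polynomial.isUnit_iff_degree_eq_zero] at h
    have := auxF2_natDegree
    rw [degree_eq_natDegree auxF2_ne_zero, this] at h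
    exact absurd h (by norm_num)
  · intro a b hab
    by_contra hcon
    push_neg at hcon
    obtain ⟨hua, hub⟩ := hcon
    have ha0 : a ≠ 0 := fun h => auxF2_ne_zero (by rw [hab, h, zero_mul])
    have hb0 : b ≠ 0 := fun h => auxF2_ne_zero (by rw [hab, h, mul_zero])
    have hsum : a.natDegree + b.natDegree = 4 := by
      rw [← natDegree_mul ha0 hb0, ← hab, auxF2_natDegree]
    have hap : 1 ≤ a.natDegree := by
      rcases Nat.eq_zero_or_pos a.natDegree with h | h
      · exact absurd (Polynomial.isUnit_iff_degree_eq_zero.mpr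
          (by rw [degree_eq_natDegree ha0, h]; rfl)) hua
      · exact h
    have hbp : 1 ≤ b.natDegree := by
      rcases Nat.eq_zero_or_pos b.natDegree with h | h
      · exact absurd (Polynomial.isUnit_iff_degree_eq_zero.mpr
          (by rw [degree_eq_natDegree hb0, h]; rfl)) hub
      · exact h
    rcases Nat.lt_or_ge a.natDegree 2 with h | h
    · exact aux_no_linear_factor hab (by omega)
    rcases Nat.lt_or_ge b.natDegree 2 with h' | h'
    · exact aux_no_linear_factor (hab.trans (mul_comm a b)) (by omega)
    have ha2 : a.natDegree = 2 := by omega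
    have hb2 : b.natDegree = 2 := by omega
    have hal : a.coeff 2 ≠ 0 := by
      have := mt leadingCoeff_eq_zero.mp ha0
      rwa [leadingCoeff, ha2] at this
    have hbl : b.coeff 2 ≠ 0 := by
      have := mt leadingCoeff_eq_zero.mp hb0
      rwa [leadingCoeff, hb2] at this
    have hanr : ∀ r : ZMod 2, eval r a ≠ 0 := fun r hr =>
      auxF2_no_root r (by rw [hab, eval_mul, hr, zero_mul])
    have hbnr : ∀ r : ZMod 2, eval r b ≠ 0 := fun r hr =>
      auxF2_no_root r (by rw [hab, eval_mul, hr, mul_zero])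
    have haq := aux_quad_factor ha2 hal hanr
    have hbq := aux_quad_factor hb2 hbl hbnr
    rw [haq, hbq, ← sq] at hab
    have hsq : ((X^2+X+1 : (ZMod 2)[X]))^2 = X^4 + X^2 + 1 := by
      linear_combination (X^3 + X^2 + X : (ZMod 2)[X]) * aux_two_eq_zero
    rw [hsq] at hab
    have h3 := congrArg (fun p => Polynomial.coeff p 3) hab
    simp only [auxF2] at h3
    simp [coeff_one, coeff_X] at h3

/-- The quartic `X^4 - X^3 - X^2 - X + 1` over `ℤ`. -/
noncomputable def auxQZ : ℤ[X] := X^4 - X^3 - X^2 - X + 1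

lemma auxQZ_monic : auxQZ.Monic := by unfold auxQZ; monicity!

lemma auxQZ_map2 : auxQZ.map (Int.castRingHom (ZMod 2)) = auxF2 := by
  unfold auxQZ auxF2
  simp only [Polynomial.map_add, Polynomial.map_sub, Polynomial.map_pow, map_X,
    Polynomial.map_one]
  linear_combination (-(X:(ZMod 2)[X])^3 - X^2 - X) * aux_two_eq_zero

lemma auxQZ_irreducible : Irreducible auxQZ :=
  auxQZ_monic.irreducible_of_irreducible_map (Int.castRingHom (ZMod 2)) auxQZ
    (auxQZ_map2 ▸ auxF2_irreducible)

/-- The quartic over `ℚ`. -/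
noncomputable def auxPQ : ℚ[X] := auxQZ.map (algebraMap ℤ ℚ)

lemma auxPQ_irreducible : Irreducible auxPQ :=
  (auxQZ_monic.irreducible_iff_irreducible_map_fraction_map (K := ℚ)).mp auxQZ_irreducible

lemma aux_aeval (z : ℂ) : aeval z auxPQ = z^4 - z^3 - z^2 - z + 1 := by
  unfold auxPQ
  rw [aeval_map_algebraMap]
  unfold auxQZ
  simp

lemma aux_real_root :
    ∃ x : ℝ, (x^4 - x^3 - x^2 - x + 1 = 0) ∧ x ∈ Set.Icc (0:ℝ) (3/5) := by
  have hc : ContinuousOn (fun x : ℝ => x^4 - x^3 - x^2 - x + 1) (Set.Icc 0 (3/5)) := by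
    fun_prop
  have h := intermediate_value_Icc' (by norm_num : (0:ℝ) ≤ 3/5) hc
  have h0 : (0:ℝ) ∈ Set.Icc ((3/5:ℝ)^4 - (3/5)^3 - (3/5)^2 - 3/5 + 1)
      ((0:ℝ)^4 - 0^3 - 0^2 - 0 + 1) := by
    constructor <;> norm_num
  obtain ⟨x, hx, hfx⟩ := h h0
  exact ⟨x, hfx, hx⟩

lemma aux_circle_root : ∃ z : ℂ, z^4 - z^3 - z^2 - z + 1 = 0 ∧ ‖z‖ = 1 := by
  obtain ⟨s, hs⟩ : ∃ s : ℝ, s = Real.sqrt 13 := ⟨_, rfl⟩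
  have hs2 : s^2 = 13 := by rw [hs]; exact Real.sq_sqrt (by norm_num)
  have hsnn : 0 ≤ s := hs ▸ Real.sqrt_nonneg 13
  obtain ⟨c, hc⟩ : ∃ c : ℝ, c = (1 - s)/4 := ⟨_, rfl⟩
  have hc2 : 1 - c^2 ≥ 0 := by
    have h : c^2 = (14 - 2*s)/16 := by rw [hc]; field_simp; linear_combination 16*hs2
    nlinarith
  obtain ⟨u, hu⟩ : ∃ u : ℝ, u = Real.sqrt (1 - c^2) := ⟨_, rfl⟩
  have hu2 : u^2 = 1 - c^2 := by rw [hu]; exact Real.sq_sqrt hc2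
  refine ⟨(c:ℂ) + (u:ℂ) * Complex.I, ?_, ?_⟩
  · have hu2' : (u:ℂ)^2 = 1 - (c:ℂ)^2 := by exact_mod_cast congrArg (Complex.ofReal) hu2
    have hz2 : ((c:ℂ) + (u:ℂ) * Complex.I)^2 - 2*(c:ℂ)*((c:ℂ) + (u:ℂ) * Complex.I) + 1 = 0 := by
      have hI : Complex.I^2 = -1 := Complex.I_sq
      linear_combination (u:ℂ)^2 * hI - hu2'
    have hcc : 4*(c:ℂ)^2 - 2*(c:ℂ) - 3 = 0 := by
      have hs2' : (s:ℂ)^2 = 13 := by exact_mod_cast congrArg (Complex.ofReal) hs2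
      have hc' : (c:ℂ) = (1 - (s:ℂ))/4 := by exact_mod_cast congrArg (Complex.ofReal) hc
      rw [hc']
      linear_combination (1/4 : ℂ) * hs2'
    set z : ℂ := (c:ℂ) + (u:ℂ) * Complex.I
    linear_combination (z^2 + (2*(c:ℂ)-1)*z + 1) * hz2 + z^2 * hcc
  · have hn : Complex.normSq ((c:ℂ) + (u:ℂ) * Complex.I) = 1 := by
      simp [Complex.normSq_apply]
      nlinarith [hu2]
    rw [Complex.norm_def, hn, Real.sqrt_one]

end Aux

/-- There exists an irreducible polynomial `p(t) ∈ ℚ[t]` with two complex roots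
`a₁, a₂` such that `|a₁| = 1` and `|a₂| < 1`. -/
theorem stmt_13 :
    ∃ p : Polynomial ℚ, Irreducible p ∧
      ∃ a₁ a₂ : ℂ, Polynomial.aeval a₁ p = 0 ∧ Polynomial.aeval a₂ p = 0 ∧
        ‖a₁‖ = 1 ∧ ‖a₂‖ < 1 := by
  obtain ⟨z, hz, hzabs⟩ := aux_circle_root
  obtain ⟨x, hx, hx0, hx1⟩ := aux_real_root
  refine ⟨auxPQ, auxPQ_irreducible, z, (x:ℂ), ?_, ?_, hzabs, ?_⟩
  · rw [aux_aeval]; exact hz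
  · rw [aux_aeval]
    exact_mod_cast congrArg (Complex.ofReal) hx
  · rw [Complex.norm_real, Real.norm_of_nonneg hx0]
    linarith
end
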